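/- arXiv:0704.2326 — 3 statements merged into one kernel-verified Lean document; each statement's English description precedes it below -/
import Mathlib

section
/- Let U, Ũ, V, Ṽ : ℝ × ℝ → Matrix (Fin 2) (Fin 2) ℂ all be traceless, and let L : ℝ × ℝ → Matrix (Fin 2) (Fin 2) ℂ be differentiable satisfying ∂ₓL = ŨL − LU and ∂ₜL = ṼL − LV. Then det L is constant: ∂ₓ(det L) = 0 and ∂ₜ(det L) = 0. -/
open Matrix

/-- Partial derivative in the first variable, entrywise, of a matrix-valued function. -/
noncomputable def matPderivX (F : ℝ × ℝ → Matrix (Fin 2) (Fin 2) ℂ) (x t : ℝ) :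
    Matrix (Fin 2) (Fin 2) ℂ :=
  Matrix.of fun i j => deriv (fun x' => F (x', t) i j) x

/-- Partial derivative in the second variable, entrywise, of a matrix-valued function. -/
noncomputable def matPderivT (F : ℝ × ℝ → Matrix (Fin 2) (Fin 2) ℂ) (x t : ℝ) :
    Matrix (Fin 2) (Fin 2) ℂ :=
  Matrix.of fun i j => deriv (fun t' => F (x, t') i j) t

private lemma aux_det_deriv (U Ut L : ℝ → Matrix (Fin 2) (Fin 2) ℂ)
    (htrU : ∀ s, (U s).trace = 0) (htrUt : ∀ s, (Ut s).trace = 0)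
    (hL : ∀ i j, Differentiable ℝ (fun s => L s i j))
    (hderiv : ∀ s i j, deriv (fun s' => L s' i j) s = (Ut s * L s - L s * U s) i j)
    (s : ℝ) : deriv (fun s' => (L s').det) s = 0 := by
  have hfun : (fun s' => (L s').det)
      = fun s' => L s' 0 0 * L s' 1 1 - L s' 0 1 * L s' 1 0 :=
    funext fun s' => Matrix.det_fin_two _
  rw [hfun, deriv_fun_sub (((hL 0 0).fun_mul (hL 1 1)) s) (((hL 0 1).fun_mul (hL 1 0)) s),
    deriv_fun_mul ((hL 0 0) s) ((hL 1 1) s), deriv_fun_mul ((hL 0 1) s) ((hL 1 0) s),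
    hderiv s 0 0, hderiv s 1 1, hderiv s 0 1, hderiv s 1 0]
  have hU := htrU s
  have hUt := htrUt s
  rw [Matrix.trace_fin_two] at hU hUt
  simp only [Matrix.sub_apply, Matrix.mul_apply, Fin.sum_univ_two]
  linear_combination (L s 0 0 * L s 1 1 - L s 0 1 * L s 1 0) * (hUt - hU)

theorem det_defect_matrix_const
    (U Ut V Vt L : ℝ × ℝ → Matrix (Fin 2) (Fin 2) ℂ)
    (htrU : ∀ p, (U p).trace = 0) (htrUt : ∀ p, (Ut p).trace = 0)
    (htrV : ∀ p, (V p).trace = 0) (htrVt : ∀ p, (Vt p).trace = 0)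
    (hL : ∀ i j, Differentiable ℝ (fun p => L p i j))
    (hLx : ∀ x t, matPderivX L x t = Ut (x, t) * L (x, t) - L (x, t) * U (x, t))
    (hLt : ∀ x t, matPderivT L x t = Vt (x, t) * L (x, t) - L (x, t) * V (x, t)) :
    ∀ x t, deriv (fun x' => (L (x', t)).det) x = 0 ∧
      deriv (fun t' => (L (x, t')).det) t = 0 := by
  intro x t
  constructor
  · exact aux_det_deriv (fun x' => U (x', t)) (fun x' => Ut (x', t)) (fun x' => L (x', t))
      (fun s => htrU _) (fun s => htrUt _)
      (fun i j => (hL i j).comp (differentiable_id.prodMk (differentiable_const t)))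
      (fun s i j => by
        have := congrFun (congrFun (hLx s t) i) j
        simpa [matPderivX] using this) x
  · exact aux_det_deriv (fun t' => V (x, t')) (fun t' => Vt (x, t')) (fun t' => L (x, t'))
      (fun s => htrV _) (fun s => htrVt _)
      (fun i j => (hL i j).comp ((differentiable_const x).prodMk differentiable_id))
      (fun s i j => by
        have := congrFun (congrFun (hLt x s) i) j
        simpa [matPderivT] using this) t
end

section
/- Let U, Ũ, V, Ṽ : ℝ × ℝ → Matrix (Fin 2) (Fin 2) ℂ be C¹ and let L : ℝ × ℝ → Matrix (Fin 2) (Fin 2) ℂ be C², invertible everywhere, satisfying ∂ₓL = ŨL − LU and ∂ₜL = ṼL − LV. Then the zero curvature condition ∂ₜU − ∂ₓV + [U,V] = 0 holds for all (x,t) if and only if ∂ₜŨ − ∂ₓṼ + [Ũ,Ṽ] = 0 holds for all (x,t). -/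
open Matrix

section aux

lemma aux_hasDerivAt_fst {F : Type*} [NormedAddCommGroup F] [NormedSpace ℝ F]
    (g : ℝ × ℝ → F) (x t : ℝ) (hg : DifferentiableAt ℝ g (x, t)) :
    HasDerivAt (fun x' => g (x', t)) (fderiv ℝ g (x, t) ((1 : ℝ), (0 : ℝ))) x := by
  have h1 : HasDerivAt (fun x' : ℝ => (x', t)) ((1 : ℝ), (0 : ℝ)) x :=
    (hasDerivAt_id x).prodMk (hasDerivAt_const x t)
  exact hg.hasFDerivAt.comp_hasDerivAt x h1

lemma aux_hasDerivAt_snd {F : Type*} [NormedAddCommGroup F] [NormedSpace ℝ F]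
    (g : ℝ × ℝ → F) (x t : ℝ) (hg : DifferentiableAt ℝ g (x, t)) :
    HasDerivAt (fun t' => g (x, t')) (fderiv ℝ g (x, t) ((0 : ℝ), (1 : ℝ))) t := by
  have h1 : HasDerivAt (fun t' : ℝ => (x, t')) ((0 : ℝ), (1 : ℝ)) t :=
    (hasDerivAt_const t x).prodMk (hasDerivAt_id t)
  exact hg.hasFDerivAt.comp_hasDerivAt t h1

lemma aux_clairaut (f : ℝ × ℝ → ℂ) (hf : ContDiff ℝ 2 f) (x t : ℝ) :
    deriv (fun t' => deriv (fun x' => f (x', t')) x) t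
      = deriv (fun x' => deriv (fun t' => f (x', t')) t) x := by
  have hd : Differentiable ℝ f := hf.differentiable (by norm_num)
  have hf' : ContDiff ℝ 1 (fderiv ℝ f) := hf.fderiv_right (by norm_num)
  have hd' : Differentiable ℝ (fderiv ℝ f) := hf'.differentiable one_ne_zero
  have hsym : ∀ v w, fderiv ℝ (fderiv ℝ f) (x, t) v w = fderiv ℝ (fderiv ℝ f) (x, t) w v :=
    hf.contDiffAt.isSymmSndFDerivAt (by norm_num)
  -- apply maps
  set A1 : ((ℝ × ℝ) →L[ℝ] ℂ) →L[ℝ] ℂ := ContinuousLinearMap.apply ℝ ℂ ((1 : ℝ), (0 : ℝ))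
  set A2 : ((ℝ × ℝ) →L[ℝ] ℂ) →L[ℝ] ℂ := ContinuousLinearMap.apply ℝ ℂ ((0 : ℝ), (1 : ℝ))
  have e1 : (fun t' => deriv (fun x' => f (x', t')) x)
      = fun t' => A1 (fderiv ℝ f (x, t')) := by
    funext t'
    exact (aux_hasDerivAt_fst f x t' (hd _)).deriv
  have e2 : (fun x' => deriv (fun t' => f (x', t')) t)
      = fun x' => A2 (fderiv ℝ f (x', t)) := by
    funext x'
    exact (aux_hasDerivAt_snd f x' t (hd _)).deriv
  rw [e1, e2]
  have hg1 : DifferentiableAt ℝ (fun p => A1 (fderiv ℝ f p)) (x, t) :=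
    (A1.differentiableAt).comp _ (hd' _)
  have hg2 : DifferentiableAt ℝ (fun p => A2 (fderiv ℝ f p)) (x, t) :=
    (A2.differentiableAt).comp _ (hd' _)
  have d1 : deriv (fun t' => A1 (fderiv ℝ f (x, t'))) t
      = fderiv ℝ (fun p => A1 (fderiv ℝ f p)) (x, t) ((0 : ℝ), (1 : ℝ)) :=
    (aux_hasDerivAt_snd (fun p => A1 (fderiv ℝ f p)) x t hg1).deriv
  have d2 : deriv (fun x' => A2 (fderiv ℝ f (x', t))) x
      = fderiv ℝ (fun p => A2 (fderiv ℝ f p)) (x, t) ((1 : ℝ), (0 : ℝ)) :=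
    (aux_hasDerivAt_fst (fun p => A2 (fderiv ℝ f p)) x t hg2).deriv
  have c1 : fderiv ℝ (fun p => A1 (fderiv ℝ f p)) (x, t)
      = A1.comp (fderiv ℝ (fderiv ℝ f) (x, t)) :=
    (A1.hasFDerivAt.comp (x, t) (hd' (x, t)).hasFDerivAt).fderiv
  have c2 : fderiv ℝ (fun p => A2 (fderiv ℝ f p)) (x, t)
      = A2.comp (fderiv ℝ (fderiv ℝ f) (x, t)) :=
    (A2.hasFDerivAt.comp (x, t) (hd' (x, t)).hasFDerivAt).fderiv
  rw [d1, d2, c1, c2]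
  simpa [A1, A2, ContinuousLinearMap.apply] using hsym ((0 : ℝ), (1 : ℝ)) ((1 : ℝ), (0 : ℝ))

lemma aux_sliceT_diff (f : ℝ × ℝ → ℂ) (hf : Differentiable ℝ f) (x t : ℝ) :
    DifferentiableAt ℝ (fun t' => f (x, t')) t :=
  (hf (x, t)).comp t ((differentiableAt_const x).prodMk differentiableAt_id)

lemma aux_sliceX_diff (f : ℝ × ℝ → ℂ) (hf : Differentiable ℝ f) (x t : ℝ) :
    DifferentiableAt ℝ (fun x' => f (x', t)) x :=
  (hf (x, t)).comp x (differentiableAt_id.prodMk (differentiableAt_const t))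

lemma aux_sliceT_mul_diff (A B : ℝ × ℝ → Matrix (Fin 2) (Fin 2) ℂ) (x t : ℝ)
    (hA : ∀ i j, DifferentiableAt ℝ (fun t' => A (x, t') i j) t)
    (hB : ∀ i j, DifferentiableAt ℝ (fun t' => B (x, t') i j) t) :
    ∀ i j, DifferentiableAt ℝ (fun t' => (A (x, t') * B (x, t')) i j) t := by
  intro i j
  have h : (fun t' => (A (x, t') * B (x, t')) i j)
      = fun t' => A (x, t') i 0 * B (x, t') 0 j + A (x, t') i 1 * B (x, t') 1 j := by
    funext t'; simp [Matrix.mul_apply, Fin.sum_univ_two]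
  rw [h]
  exact ((hA i 0).mul (hB 0 j)).add ((hA i 1).mul (hB 1 j))

lemma aux_sliceX_mul_diff (A B : ℝ × ℝ → Matrix (Fin 2) (Fin 2) ℂ) (x t : ℝ)
    (hA : ∀ i j, DifferentiableAt ℝ (fun x' => A (x', t) i j) x)
    (hB : ∀ i j, DifferentiableAt ℝ (fun x' => B (x', t) i j) x) :
    ∀ i j, DifferentiableAt ℝ (fun x' => (A (x', t) * B (x', t)) i j) x := by
  intro i j
  have h : (fun x' => (A (x', t) * B (x', t)) i j)
      = fun x' => A (x', t) i 0 * B (x', t) 0 j + A (x', t) i 1 * B (x', t) 1 j := by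
    funext x'; simp [Matrix.mul_apply, Fin.sum_univ_two]
  rw [h]
  exact ((hA i 0).mul (hB 0 j)).add ((hA i 1).mul (hB 1 j))

lemma matPderivT_mul (A B : ℝ × ℝ → Matrix (Fin 2) (Fin 2) ℂ) (x t : ℝ)
    (hA : ∀ i j, DifferentiableAt ℝ (fun t' => A (x, t') i j) t)
    (hB : ∀ i j, DifferentiableAt ℝ (fun t' => B (x, t') i j) t) :
    matPderivT (fun p => A p * B p) x t
      = matPderivT A x t * B (x, t) + A (x, t) * matPderivT B x t := by
  ext i j
  have h : (fun t' => (A (x, t') * B (x, t')) i j)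
      = fun t' => A (x, t') i 0 * B (x, t') 0 j + A (x, t') i 1 * B (x, t') 1 j := by
    funext t'; simp [Matrix.mul_apply, Fin.sum_univ_two]
  simp only [matPderivT, Matrix.of_apply, Matrix.add_apply, Matrix.mul_apply, Fin.sum_univ_two, h]
  rw [deriv_fun_add ((hA i 0).fun_mul (hB 0 j)) ((hA i 1).fun_mul (hB 1 j)),
      deriv_fun_mul (hA i 0) (hB 0 j), deriv_fun_mul (hA i 1) (hB 1 j)]
  ring

lemma matPderivX_mul (A B : ℝ × ℝ → Matrix (Fin 2) (Fin 2) ℂ) (x t : ℝ)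
    (hA : ∀ i j, DifferentiableAt ℝ (fun x' => A (x', t) i j) x)
    (hB : ∀ i j, DifferentiableAt ℝ (fun x' => B (x', t) i j) x) :
    matPderivX (fun p => A p * B p) x t
      = matPderivX A x t * B (x, t) + A (x, t) * matPderivX B x t := by
  ext i j
  have h : (fun x' => (A (x', t) * B (x', t)) i j)
      = fun x' => A (x', t) i 0 * B (x', t) 0 j + A (x', t) i 1 * B (x', t) 1 j := by
    funext x'; simp [Matrix.mul_apply, Fin.sum_univ_two]
  simp only [matPderivX, Matrix.of_apply, Matrix.add_apply, Matrix.mul_apply, Fin.sum_univ_two, h]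
  rw [deriv_fun_add ((hA i 0).fun_mul (hB 0 j)) ((hA i 1).fun_mul (hB 1 j)),
      deriv_fun_mul (hA i 0) (hB 0 j), deriv_fun_mul (hA i 1) (hB 1 j)]
  ring

lemma matPderivT_sub (A B : ℝ × ℝ → Matrix (Fin 2) (Fin 2) ℂ) (x t : ℝ)
    (hA : ∀ i j, DifferentiableAt ℝ (fun t' => A (x, t') i j) t)
    (hB : ∀ i j, DifferentiableAt ℝ (fun t' => B (x, t') i j) t) :
    matPderivT (fun p => A p - B p) x t = matPderivT A x t - matPderivT B x t := by
  ext i j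
  simp only [matPderivT, Matrix.of_apply, Matrix.sub_apply]
  exact deriv_sub (hA i j) (hB i j)

lemma matPderivX_sub (A B : ℝ × ℝ → Matrix (Fin 2) (Fin 2) ℂ) (x t : ℝ)
    (hA : ∀ i j, DifferentiableAt ℝ (fun x' => A (x', t) i j) x)
    (hB : ∀ i j, DifferentiableAt ℝ (fun x' => B (x', t) i j) x) :
    matPderivX (fun p => A p - B p) x t = matPderivX A x t - matPderivX B x t := by
  ext i j
  simp only [matPderivX, Matrix.of_apply, Matrix.sub_apply]
  exact deriv_sub (hA i j) (hB i j)

end aux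

theorem backlund_preserves_zero_curvature
    (U Ut V Vt L : ℝ × ℝ → Matrix (Fin 2) (Fin 2) ℂ)
    (hU : ∀ i j, ContDiff ℝ 1 (fun p => U p i j))
    (hUt : ∀ i j, ContDiff ℝ 1 (fun p => Ut p i j))
    (hV : ∀ i j, ContDiff ℝ 1 (fun p => V p i j))
    (hVt : ∀ i j, ContDiff ℝ 1 (fun p => Vt p i j))
    (hL : ∀ i j, ContDiff ℝ 2 (fun p => L p i j))
    (hLinv : ∀ p, IsUnit (L p))
    (hLx : ∀ x t, matPderivX L x t = Ut (x, t) * L (x, t) - L (x, t) * U (x, t))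
    (hLt : ∀ x t, matPderivT L x t = Vt (x, t) * L (x, t) - L (x, t) * V (x, t)) :
    (∀ x t, matPderivT U x t - matPderivX V x t +
        (U (x, t) * V (x, t) - V (x, t) * U (x, t)) = 0) ↔
    (∀ x t, matPderivT Ut x t - matPderivX Vt x t +
        (Ut (x, t) * Vt (x, t) - Vt (x, t) * Ut (x, t)) = 0) := by
  -- differentiability of slices
  have dUT : ∀ x t i j, DifferentiableAt ℝ (fun t' => U (x, t') i j) t := fun x t i j =>
    aux_sliceT_diff _ ((hU i j).differentiable one_ne_zero) x t
  have dUX : ∀ x t i j, DifferentiableAt ℝ (fun x' => U (x', t) i j) x := fun x t i j =>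
    aux_sliceX_diff _ ((hU i j).differentiable one_ne_zero) x t
  have dUtT : ∀ x t i j, DifferentiableAt ℝ (fun t' => Ut (x, t') i j) t := fun x t i j =>
    aux_sliceT_diff _ ((hUt i j).differentiable one_ne_zero) x t
  have dUtX : ∀ x t i j, DifferentiableAt ℝ (fun x' => Ut (x', t) i j) x := fun x t i j =>
    aux_sliceX_diff _ ((hUt i j).differentiable one_ne_zero) x t
  have dVT : ∀ x t i j, DifferentiableAt ℝ (fun t' => V (x, t') i j) t := fun x t i j =>
    aux_sliceT_diff _ ((hV i j).differentiable one_ne_zero) x t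
  have dVX : ∀ x t i j, DifferentiableAt ℝ (fun x' => V (x', t) i j) x := fun x t i j =>
    aux_sliceX_diff _ ((hV i j).differentiable one_ne_zero) x t
  have dVtT : ∀ x t i j, DifferentiableAt ℝ (fun t' => Vt (x, t') i j) t := fun x t i j =>
    aux_sliceT_diff _ ((hVt i j).differentiable one_ne_zero) x t
  have dVtX : ∀ x t i j, DifferentiableAt ℝ (fun x' => Vt (x', t) i j) x := fun x t i j =>
    aux_sliceX_diff _ ((hVt i j).differentiable one_ne_zero) x t
  have dLT : ∀ x t i j, DifferentiableAt ℝ (fun t' => L (x, t') i j) t := fun x t i j =>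
    aux_sliceT_diff _ ((hL i j).differentiable (by norm_num)) x t
  have dLX : ∀ x t i j, DifferentiableAt ℝ (fun x' => L (x', t) i j) x := fun x t i j =>
    aux_sliceX_diff _ ((hL i j).differentiable (by norm_num)) x t
  -- the key mixed-partials identity
  have key : ∀ x t, matPderivT (fun p => Ut p * L p - L p * U p) x t
      = matPderivX (fun p => Vt p * L p - L p * V p) x t := by
    intro x t
    ext i j
    have e1 : (fun t' => (Ut (x, t') * L (x, t') - L (x, t') * U (x, t')) i j)
        = fun t' => deriv (fun x' => L (x', t') i j) x := by
      funext t'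
      have h := congrArg (fun M => M i j) (hLx x t')
      simpa [matPderivX] using h.symm
    have e2 : (fun x' => (Vt (x', t) * L (x', t) - L (x', t) * V (x', t)) i j)
        = fun x' => deriv (fun t' => L (x', t') i j) t := by
      funext x'
      have h := congrArg (fun M => M i j) (hLt x' t)
      simpa [matPderivT] using h.symm
    simp only [matPderivT, matPderivX, Matrix.of_apply]
    rw [e1, e2]
    exact aux_clairaut (fun p => L p i j) (hL i j) x t
  -- expand both sides of key
  have main : ∀ x t,
      (matPderivT Ut x t - matPderivX Vt x t +
          (Ut (x, t) * Vt (x, t) - Vt (x, t) * Ut (x, t))) * L (x, t)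
        = L (x, t) * (matPderivT U x t - matPderivX V x t +
          (U (x, t) * V (x, t) - V (x, t) * U (x, t))) := by
    intro x t
    have h := key x t
    rw [matPderivT_sub _ _ x t
          (aux_sliceT_mul_diff Ut L x t (dUtT x t) (dLT x t))
          (aux_sliceT_mul_diff L U x t (dLT x t) (dUT x t)),
        matPderivT_mul Ut L x t (dUtT x t) (dLT x t),
        matPderivT_mul L U x t (dLT x t) (dUT x t),
        matPderivX_sub _ _ x t
          (aux_sliceX_mul_diff Vt L x t (dVtX x t) (dLX x t))
          (aux_sliceX_mul_diff L V x t (dLX x t) (dVX x t)),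
        matPderivX_mul Vt L x t (dVtX x t) (dLX x t),
        matPderivX_mul L V x t (dLX x t) (dVX x t),
        hLt x t, hLx x t] at h
    have h2 : (matPderivT Ut x t - matPderivX Vt x t +
          (Ut (x, t) * Vt (x, t) - Vt (x, t) * Ut (x, t))) * L (x, t)
        - L (x, t) * (matPderivT U x t - matPderivX V x t +
          (U (x, t) * V (x, t) - V (x, t) * U (x, t)))
        = (matPderivT Ut x t * L (x, t) +
            Ut (x, t) * (Vt (x, t) * L (x, t) - L (x, t) * V (x, t)) -
            ((Vt (x, t) * L (x, t) - L (x, t) * V (x, t)) * U (x, t) +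
              L (x, t) * matPderivT U x t))
        - (matPderivX Vt x t * L (x, t) +
            Vt (x, t) * (Ut (x, t) * L (x, t) - L (x, t) * U (x, t)) -
            ((Ut (x, t) * L (x, t) - L (x, t) * U (x, t)) * V (x, t) +
              L (x, t) * matPderivX V x t)) := by
      noncomm_ring
    rw [h, sub_self] at h2
    exact sub_eq_zero.mp h2
  constructor
  · intro hF x t
    have hu := hLinv (x, t)
    have h0 : (matPderivT Ut x t - matPderivX Vt x t +
        (Ut (x, t) * Vt (x, t) - Vt (x, t) * Ut (x, t))) * L (x, t) = 0 := by
      rw [main x t, hF x t, mul_zero]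
    calc matPderivT Ut x t - matPderivX Vt x t +
          (Ut (x, t) * Vt (x, t) - Vt (x, t) * Ut (x, t))
        = (matPderivT Ut x t - matPderivX Vt x t +
          (Ut (x, t) * Vt (x, t) - Vt (x, t) * Ut (x, t))) * L (x, t) * ↑hu.unit⁻¹ := by
          rw [mul_assoc, hu.mul_val_inv, mul_one]
      _ = 0 := by rw [h0, zero_mul]
  · intro hG x t
    have hu := hLinv (x, t)
    have h0 : L (x, t) * (matPderivT U x t - matPderivX V x t +
        (U (x, t) * V (x, t) - V (x, t) * U (x, t))) = 0 := by
      rw [← main x t, hG x t, zero_mul]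
    calc matPderivT U x t - matPderivX V x t +
          (U (x, t) * V (x, t) - V (x, t) * U (x, t))
        = ↑hu.unit⁻¹ * (L (x, t) * (matPderivT U x t - matPderivX V x t +
          (U (x, t) * V (x, t) - V (x, t) * U (x, t)))) := by
          rw [← mul_assoc, hu.val_inv_mul, one_mul]
      _ = 0 := by rw [h0, mul_zero]
end

section
/- Let a₁, a₂, a₃, a₄ : ℝ → ℂ be differentiable and let q, r, q̃, r̃ : ℝ → ℂ. Suppose a₂' = q̃a₄ − qa₁, a₃' = r̃a₁ − ra₄, (a₁a₄ − a₂a₃)' = 0, a₁' + a₄' = 0, (q̃ − q)a₃ + (r̃ − r)a₂ = 0, and a₄(x) ≠ a₁(x) for all x. Then a₁' = q̃a₃ − ra₂ and a₄' = r̃a₂ − qa₃. -/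
theorem backlund_redundancy
    (a₁ a₂ a₃ a₄ q r qt rt : ℝ → ℂ)
    (h1 : Differentiable ℝ a₁) (h2 : Differentiable ℝ a₂)
    (h3 : Differentiable ℝ a₃) (h4 : Differentiable ℝ a₄)
    (ha2 : ∀ x, deriv a₂ x = qt x * a₄ x - q x * a₁ x)
    (ha3 : ∀ x, deriv a₃ x = rt x * a₁ x - r x * a₄ x)
    (hdet : ∀ x, deriv (fun y => a₁ y * a₄ y - a₂ y * a₃ y) x = 0)
    (htr : ∀ x, deriv a₁ x + deriv a₄ x = 0)
    (hrel : ∀ x, (qt x - q x) * a₃ x + (rt x - r x) * a₂ x = 0)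
    (hne : ∀ x, a₄ x ≠ a₁ x) :
    (∀ x, deriv a₁ x = qt x * a₃ x - r x * a₂ x) ∧
    (∀ x, deriv a₄ x = rt x * a₂ x - q x * a₃ x) := by
  have key : ∀ x, deriv a₁ x = qt x * a₃ x - r x * a₂ x := by
    intro x
    have hd : deriv (fun y => a₁ y * a₄ y - a₂ y * a₃ y) x =
        deriv a₁ x * a₄ x + a₁ x * deriv a₄ x -
        (deriv a₂ x * a₃ x + a₂ x * deriv a₃ x) := by
      rw [deriv_fun_sub ((h1 x).fun_mul (h4 x)) ((h2 x).fun_mul (h3 x)),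
        deriv_fun_mul (h1 x) (h4 x), deriv_fun_mul (h2 x) (h3 x)]
    have h0 := hdet x
    rw [hd, ha2 x, ha3 x] at h0
    have h4' : deriv a₄ x = -deriv a₁ x := by
      have := htr x; linear_combination this - deriv a₁ x
    have hcancel : (a₄ x - a₁ x) ≠ 0 := sub_ne_zero.mpr (hne x)
    have hmain : deriv a₁ x * (a₄ x - a₁ x) =
        (qt x * a₃ x - r x * a₂ x) * (a₄ x - a₁ x) := by
      linear_combination h0 - a₁ x * h4' + a₁ x * hrel x
    exact mul_right_cancel₀ hcancel hmain
  refine ⟨key, fun x => ?_⟩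
  have h4' : deriv a₄ x = -deriv a₁ x := by
    have := htr x; linear_combination this - deriv a₁ x
  rw [h4', key x]
  linear_combination -hrel x
end
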